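/- For any 3-coloring of the edges of K_n with n ≥ 2, assuming that no vertex is incident with edges of all three colors, there exist a color c and a set A of at most 4 vertices that strongly c-dominates at least 2n/3 vertices. -/

import Mathlib

open Finset

/-- The set of colors appearing on edges incident with `v`. -/
def colorsAt {V : Type*} [Fintype V] [DecidableEq V]
    (col : V → V → Fin 3) (v : V) : Finset (Fin 3) :=
  Finset.univ.filter (fun c => ∃ u, u ≠ v ∧ col v u = c)

/-- The set of vertices strongly `c`-dominated by `A`. -/
def sdom {V : Type*} [Fintype V] [DecidableEq V]
    (col : V → V → Fin 3) (A : Finset V) (c : Fin 3) : Finset V :=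
  Finset.univ.filter (fun y => ∃ x ∈ A, x ≠ y ∧ col x y = c)

private lemma fin3All : ∀ a b c d : Fin 3, a ≠ b → a ≠ c → b ≠ c →
    (d = a ∨ d = b ∨ d = c) := by decide

private lemma fin3ex : ∀ c : Fin 3, ∃ a b : Fin 3, a ≠ b ∧ a ≠ c ∧ b ≠ c := by decide

private lemma oneside {n : ℕ} (hn : 2 ≤ n) (col : Fin n → Fin n → Fin 3)
    (hsym : ∀ x y, col x y = col y x)
    (a b c : Fin 3) (hab : a ≠ b) (hac : a ≠ c) (hbc : b ≠ c)
    (hnoa : ∀ x y, x ≠ y → col x y ≠ a)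
    (x₀ w : Fin n) (hw : w ≠ x₀) (hwb : col x₀ w = b)
    (hF : 3 * ((Finset.univ.filter (fun y => y ≠ x₀ ∧ col x₀ y = c)).filter
        (fun y => col w y = c)).card ≤ n) :
    2 * n ≤ 3 * (sdom col {x₀, w} b).card := by
  set T := (Finset.univ.filter (fun y => y ≠ x₀ ∧ col x₀ y = c)).filter
      (fun y => col w y = c) with hT
  have hsub : Finset.univ \ T ⊆ sdom col {x₀, w} b := by
    intro y hy
    rw [mem_sdiff] at hy
    have hyT := hy.2
    simp only [sdom, mem_filter]
    refine ⟨mem_univ _, ?_⟩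
    by_cases hyx : y = x₀
    · exact ⟨w, by simp, by rw [hyx]; exact hw, by rw [hyx, hsym w x₀]; exact hwb⟩
    · by_cases hyb : col x₀ y = b
      · exact ⟨x₀, by simp, fun h => hyx h.symm, hyb⟩
      · have hxy : x₀ ≠ y := fun h => hyx h.symm
        have h1 : col x₀ y = c := by
          rcases fin3All a b c (col x₀ y) hab hac hbc with h | h | h
          · exact absurd h (hnoa x₀ y hxy)
          · exact absurd h hyb
          · exact h
        have hyw : y ≠ w := by
          intro h; rw [h, hwb] at h1; exact hbc h1
        have h2 : ¬ col w y = c := by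
          intro h
          exact hyT (mem_filter.mpr ⟨mem_filter.mpr ⟨mem_univ _, hyx, h1⟩, h⟩)
        have h3 : col w y = b := by
          rcases fin3All a b c (col w y) hab hac hbc with h | h | h
          · exact absurd h (hnoa w y (Ne.symm hyw))
          · exact h
          · exact absurd h h2
        exact ⟨w, by simp, Ne.symm hyw, h3⟩
  have h4 := card_le_card hsub
  have h5 : (Finset.univ \ T).card = n - T.card := by
    rw [card_sdiff_of_subset (subset_univ T), card_univ, Fintype.card_fin]
  have h6 : T.card ≤ n := by
    calc T.card ≤ (Finset.univ : Finset (Fin n)).card := card_le_card (subset_univ T)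
    _ = n := by rw [card_univ, Fintype.card_fin]
  omega

theorem stmt13 (n : ℕ) (hn : 2 ≤ n) (col : Fin n → Fin n → Fin 3)
    (hsym : ∀ x y, col x y = col y x)
    (hcol : ∀ v, colorsAt col v ≠ Finset.univ) :
    ∃ (c : Fin 3) (A : Finset (Fin n)),
      A.card ≤ 4 ∧ 2 * n ≤ 3 * (sdom col A c).card := by
  have hmiss : ∀ v, ∃ c, c ∉ colorsAt col v := by
    intro v
    by_contra h
    push_neg at h
    exact hcol v (Finset.eq_univ_iff_forall.mpr h)
  choose m hm using hmiss
  have hedge : ∀ u v : Fin n, u ≠ v → col u v ≠ m u := by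
    intro u v huv hc
    exact hm u (by simp only [colorsAt, mem_filter]; exact ⟨mem_univ _, v, Ne.symm huv, hc⟩)
  by_cases hconst : ∀ u v : Fin n, m u = m v
  · -- all vertices miss the same color: a genuine 2-coloring
    have hpos : 0 < n := by omega
    set x₀ : Fin n := ⟨0, hpos⟩ with hx₀
    set a := m x₀ with ha
    have hnoa : ∀ x y : Fin n, x ≠ y → col x y ≠ a := by
      intro x y hxy h
      exact hedge x y hxy (h.trans (by rw [ha, hconst x₀ x]))
    obtain ⟨b, c, hbc, hba, hca⟩ := fin3ex a
    have hab : a ≠ b := Ne.symm hba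
    have hac : a ≠ c := Ne.symm hca
    by_cases hex1 : ∃ w : Fin n, w ≠ x₀ ∧ col x₀ w = b ∧
        3 * ((Finset.univ.filter (fun y => y ≠ x₀ ∧ col x₀ y = c)).filter
          (fun y => col w y = c)).card ≤ n
    · obtain ⟨w, hw, hwb, hF⟩ := hex1
      refine ⟨b, {x₀, w}, ?_, oneside hn col hsym a b c hab hac hbc hnoa x₀ w hw hwb hF⟩
      have h := Finset.card_insert_le x₀ ({w} : Finset (Fin n))
      rw [Finset.card_singleton] at h
      omega
    by_cases hex2 : ∃ v : Fin n, v ≠ x₀ ∧ col x₀ v = c ∧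
        3 * ((Finset.univ.filter (fun y => y ≠ x₀ ∧ col x₀ y = b)).filter
          (fun y => col v y = b)).card ≤ n
    · obtain ⟨v, hv, hvc, hG⟩ := hex2
      refine ⟨c, {x₀, v}, ?_, oneside hn col hsym a c b hac hab (Ne.symm hbc) hnoa x₀ v hv hvc hG⟩
      have h := Finset.card_insert_le x₀ ({v} : Finset (Fin n))
      rw [Finset.card_singleton] at h
      omega
    · exfalso
      push_neg at hex1 hex2
      set Sb := Finset.univ.filter (fun y => y ≠ x₀ ∧ col x₀ y = b) with hSb
      set Sc := Finset.univ.filter (fun y => y ≠ x₀ ∧ col x₀ y = c) with hSc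
      have hmemSb : ∀ w, w ∈ Sb → w ≠ x₀ ∧ col x₀ w = b := by
        intro w hw; rw [hSb, mem_filter] at hw; exact hw.2
      have hmemSc : ∀ y, y ∈ Sc → y ≠ x₀ ∧ col x₀ y = c := by
        intro y hy; rw [hSc, mem_filter] at hy; exact hy.2
      have step1 : ∀ w ∈ Sb, (Sc.filter (fun y => col w y = c)).card
          + (Sc.filter (fun y => col w y = b)).card = Sc.card := by
        intro w hw
        obtain ⟨hwx, hwb⟩ := hmemSb w hw
        have hfe : Sc.filter (fun y => ¬ col w y = c) = Sc.filter (fun y => col w y = b) := by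
          apply filter_congr
          intro y hy
          obtain ⟨hyx, hyc⟩ := hmemSc y hy
          have hwy : w ≠ y := by
            intro h; rw [h] at hwb; rw [hwb] at hyc; exact hbc hyc
          constructor
          · intro h
            rcases fin3All a b c (col w y) hab hac hbc with h' | h' | h'
            · exact absurd h' (hnoa w y hwy)
            · exact h'
            · exact absurd h' h
          · intro h hcc
            exact hbc (h.symm.trans hcc)
        rw [← hfe]
        exact Finset.card_filter_add_card_filter_not (p := fun y => col w y = c)
      have step2 : ∑ v ∈ Sc, (Sb.filter (fun y => col v y = b)).card
          = ∑ w ∈ Sb, (Sc.filter (fun y => col w y = b)).card := by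
        simp only [Finset.card_filter]
        rw [Finset.sum_comm]
        refine Finset.sum_congr rfl fun y _ => Finset.sum_congr rfl fun v _ => ?_
        rw [hsym v y]
      have step3 : (∑ w ∈ Sb, (Sc.filter (fun y => col w y = c)).card)
          + ∑ v ∈ Sc, (Sb.filter (fun y => col v y = b)).card = Sb.card * Sc.card := by
        rw [step2, ← Finset.sum_add_distrib, Finset.sum_congr rfl step1, Finset.sum_const,
          smul_eq_mul]
      have hb1 : Sb.card * (n + 1) ≤ ∑ w ∈ Sb, 3 * (Sc.filter (fun y => col w y = c)).card := by
        calc Sb.card * (n + 1) = ∑ _w ∈ Sb, (n + 1) := by rw [Finset.sum_const, smul_eq_mul]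
        _ ≤ _ := Finset.sum_le_sum fun w hw => by
            obtain ⟨hwx, hwb⟩ := hmemSb w hw
            exact hex1 w hwx hwb
      have hb2 : Sc.card * (n + 1) ≤ ∑ v ∈ Sc, 3 * (Sb.filter (fun y => col v y = b)).card := by
        calc Sc.card * (n + 1) = ∑ _v ∈ Sc, (n + 1) := by rw [Finset.sum_const, smul_eq_mul]
        _ ≤ _ := Finset.sum_le_sum fun v hv => by
            obtain ⟨hvx, hvc⟩ := hmemSc v hv
            exact hex2 v hvx hvc
      have hsum : 3 * (Sb.card * Sc.card)
          = (∑ w ∈ Sb, 3 * (Sc.filter (fun y => col w y = c)).card)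
            + ∑ v ∈ Sc, 3 * (Sb.filter (fun y => col v y = b)).card := by
        rw [← Finset.mul_sum, ← Finset.mul_sum, ← mul_add, step3]
      have hbig : (Sb.card + Sc.card) * (n + 1) ≤ 3 * (Sb.card * Sc.card) := by
        calc (Sb.card + Sc.card) * (n + 1) = Sb.card * (n + 1) + Sc.card * (n + 1) :=
              add_mul _ _ _
        _ ≤ _ := add_le_add hb1 hb2
        _ = 3 * (Sb.card * Sc.card) := hsum.symm
      have hpart : Sb ∪ Sc = Finset.univ.erase x₀ := by
        rw [hSb, hSc]
        ext y
        simp only [mem_union, mem_filter, mem_univ, true_and, mem_erase, and_true]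
        constructor
        · rintro (⟨h1, _⟩ | ⟨h1, _⟩) <;> exact h1
        · intro h1
          rcases fin3All a b c (col x₀ y) hab hac hbc with h | h | h
          · exact absurd h (hnoa x₀ y (Ne.symm h1))
          · exact Or.inl ⟨h1, h⟩
          · exact Or.inr ⟨h1, h⟩
      have hdisj : Disjoint Sb Sc := by
        rw [hSb, hSc, Finset.disjoint_left]
        intro y hy1 hy2
        rw [mem_filter] at hy1 hy2
        exact hbc ((hy1.2.2).symm.trans hy2.2.2)
      have hcards : Sb.card + Sc.card + 1 = n := by
        have h1 : (Sb ∪ Sc).card = Sb.card + Sc.card := card_union_of_disjoint hdisj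
        rw [hpart, card_erase_of_mem (mem_univ x₀), card_univ, Fintype.card_fin] at h1
        omega
      have hZ1 : ((Sb.card : ℤ) + Sc.card) * ((n : ℤ) + 1) ≤ 3 * ((Sb.card : ℤ) * Sc.card) := by
        exact_mod_cast hbig
      have hZ2 : (Sb.card : ℤ) + Sc.card + 1 = n := by exact_mod_cast hcards
      have hZn : (2 : ℤ) ≤ n := by exact_mod_cast hn
      nlinarith [sq_nonneg ((Sb.card : ℤ) - Sc.card), Int.natCast_nonneg Sb.card,
        Int.natCast_nonneg Sc.card, mul_nonneg (Int.natCast_nonneg Sb.card)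
          (Int.natCast_nonneg Sc.card)]
  · -- the missing color is not constant
    push_neg at hconst
    obtain ⟨u, v, huv⟩ := hconst
    obtain ⟨cmin, -, hcmin⟩ := Finset.exists_min_image Finset.univ
      (fun d : Fin 3 => (Finset.univ.filter (fun y : Fin n => m y = d)).card) ⟨0, mem_univ 0⟩
    obtain ⟨a, b, hab, hac, hbc⟩ := fin3ex cmin
    set Za := Finset.univ.filter (fun y : Fin n => m y = a) with hZa
    set Zb := Finset.univ.filter (fun y : Fin n => m y = b) with hZb
    set Zc := Finset.univ.filter (fun y : Fin n => m y = cmin) with hZc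
    have hca : Zc.card ≤ Za.card := by
      have h1 := hcmin a (mem_univ a)
      rw [← hZa] at h1
      exact h1
    have hcb : Zc.card ≤ Zb.card := by
      have h1 := hcmin b (mem_univ b)
      rw [← hZb] at h1
      exact h1
    have hZaZb : Za.Nonempty ∧ Zb.Nonempty := by
      by_contra hcon
      rw [not_and_or] at hcon
      have h0 : Zc.card = 0 := by
        rcases hcon with h | h
        · rw [not_nonempty_iff_eq_empty.mp h, Finset.card_empty] at hca; omega
        · rw [not_nonempty_iff_eq_empty.mp h, Finset.card_empty] at hcb; omega
      have hzc : Zc = ∅ := Finset.card_eq_zero.mp h0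
      have hval : ∀ y : Fin n, m y = a ∨ m y = b := by
        intro y
        rcases fin3All a b cmin (m y) hab hac hbc with h | h | h
        · exact Or.inl h
        · exact Or.inr h
        · exfalso
          have hyz : y ∈ Zc := by rw [hZc, mem_filter]; exact ⟨mem_univ _, h⟩
          rw [hzc] at hyz
          exact absurd hyz (notMem_empty y)
      rcases hcon with h | h
      · have hb' : ∀ y, m y = b := by
          intro y
          rcases hval y with h' | h'
          · exact absurd ⟨y, by rw [hZa, mem_filter]; exact ⟨mem_univ _, h'⟩⟩ h
          · exact h'
        exact huv ((hb' u).trans (hb' v).symm)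
      · have ha' : ∀ y, m y = a := by
          intro y
          rcases hval y with h' | h'
          · exact h'
          · exact absurd ⟨y, by rw [hZb, mem_filter]; exact ⟨mem_univ _, h'⟩⟩ h
        exact huv ((ha' u).trans (ha' v).symm)
    obtain ⟨⟨u', hu'⟩, ⟨v', hv'⟩⟩ := hZaZb
    have hmu' : m u' = a := by rw [hZa, mem_filter] at hu'; exact hu'.2
    have hmv' : m v' = b := by rw [hZb, mem_filter] at hv'; exact hv'.2
    refine ⟨cmin, {u', v'}, ?_, ?_⟩
    · have h := Finset.card_insert_le u' ({v'} : Finset (Fin n))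
      rw [Finset.card_singleton] at h
      omega
    · have hsub : Za ∪ Zb ⊆ sdom col {u', v'} cmin := by
        intro y hy
        simp only [sdom, mem_filter]
        refine ⟨mem_univ _, ?_⟩
        rw [mem_union] at hy
        rcases hy with hy | hy
        · have hmy : m y = a := by rw [hZa, mem_filter] at hy; exact hy.2
          have hne : v' ≠ y := by
            intro h; rw [h] at hmv'; exact hab (hmy.symm.trans hmv')
          have hcc : col v' y = cmin := by
            rcases fin3All a b cmin (col v' y) hab hac hbc with h | h | h
            · exact absurd ((hsym y v').trans (h.trans hmy.symm)) (hedge y v' (Ne.symm hne))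
            · exact absurd (h.trans hmv'.symm) (hedge v' y hne)
            · exact h
          exact ⟨v', by simp, hne, hcc⟩
        · have hmy : m y = b := by rw [hZb, mem_filter] at hy; exact hy.2
          have hne : u' ≠ y := by
            intro h; rw [h] at hmu'; exact hab (hmu'.symm.trans hmy)
          have hcc : col u' y = cmin := by
            rcases fin3All a b cmin (col u' y) hab hac hbc with h | h | h
            · exact absurd (h.trans hmu'.symm) (hedge u' y hne)
            · exact absurd ((hsym y u').trans (h.trans hmy.symm)) (hedge y u' (Ne.symm hne))
            · exact h
          exact ⟨u', by simp, hne, hcc⟩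
      have hdisjab : Disjoint Za Zb := by
        rw [hZa, hZb, Finset.disjoint_left]
        intro y hy1 hy2
        rw [mem_filter] at hy1 hy2
        exact hab ((hy1.2).symm.trans hy2.2)
      have hdisjc : Disjoint (Za ∪ Zb) Zc := by
        rw [hZa, hZb, hZc, Finset.disjoint_left]
        intro y hy1 hy2
        rw [mem_filter] at hy2
        rw [mem_union, mem_filter, mem_filter] at hy1
        rcases hy1 with h | h
        · exact hac ((h.2).symm.trans hy2.2)
        · exact hbc ((h.2).symm.trans hy2.2)
      have huniv : Za ∪ Zb ∪ Zc = Finset.univ := by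
        apply Finset.eq_univ_iff_forall.mpr
        intro y
        rw [mem_union, mem_union, hZa, hZb, hZc]
        rcases fin3All a b cmin (m y) hab hac hbc with h | h | h
        · exact Or.inl (Or.inl (mem_filter.mpr ⟨mem_univ _, h⟩))
        · exact Or.inl (Or.inr (mem_filter.mpr ⟨mem_univ _, h⟩))
        · exact Or.inr (mem_filter.mpr ⟨mem_univ _, h⟩)
      have hsumZ : Za.card + Zb.card + Zc.card = n := by
        have h1 : (Za ∪ Zb ∪ Zc).card = n := by
          rw [huniv, card_univ, Fintype.card_fin]
        rw [card_union_of_disjoint hdisjc, card_union_of_disjoint hdisjab] at h1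
        exact h1
      have hcardu : (Za ∪ Zb).card = Za.card + Zb.card := card_union_of_disjoint hdisjab
      have hfin := card_le_card hsub
      omega
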